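/- arXiv:1904.08989 — 9 statements merged into one kernel-verified Lean document; each statement's English description precedes it below -/
import Mathlib

section
/- Let λ = (λ_1 ≥ λ_2 ≥ ... ≥ λ_α) be a partition and let Γ_λ be the disjoint union of simplices Δ_1, ..., Δ_α where Δ_i is a (λ_i − 1)-simplex. Let μ be the conjugate partition of λ. Then the h-vector of Γ_λ satisfies h_0 = 1 and, for all 1 ≤ k ≤ λ_1, (−1)^{k−1} h_k = Σ_{m=1}^{λ_1 − k + 1} C(λ_1 − m, k−1) · (μ_m − 1). -/
/-- The simplicial complex which is the disjoint union of the full power sets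
(simplices) on the vertex sets `V i`. -/
def complexOf {α : ℕ} (V : Fin α → Finset ℕ) : Finset (Finset ℕ) :=
  Finset.univ.biUnion fun i => (V i).powerset

/-- `fvec V i` is the number of faces of cardinality `i` (i.e. dimension `i - 1`);
in particular `fvec V 0 = 1` counts the empty face (`f₋₁` in the usual indexing). -/
def fvec {α : ℕ} (V : Fin α → Finset ℕ) (i : ℕ) : ℕ :=
  ((complexOf V).filter fun S => S.card = i).card

/-- The h-vector: `hvec D f k = ∑_{i=0}^{k} (-1)^(k-i) C(D-i, D-k) f i`, where
`D = d + 1` for a complex of dimension `d` and `f i` is the number of faces of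
cardinality `i`. -/
def hvec (D : ℕ) (f : ℕ → ℕ) (k : ℕ) : ℤ :=
  ∑ i ∈ Finset.range (k + 1), (-1 : ℤ) ^ (k - i) * ((D - i).choose (D - k)) * f i

lemma keyA : ∀ (l D k : ℕ), l ≤ D →
    ∑ i ∈ Finset.range (k+1), (-1:ℤ)^i * (l.choose i) * ((D-i).choose (k-i)) = (D-l).choose k := by
  intro l
  induction l with
  | zero =>
    intro D k _
    rw [Finset.sum_eq_single 0]
    · simp
    · intro i _ hi
      obtain ⟨j, rfl⟩ := Nat.exists_eq_succ_of_ne_zero hi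
      simp
    · simp
  | succ l ih =>
    intro D k hl
    cases k with
    | zero => simp
    | succ k =>
      have hterm : ∀ i ∈ Finset.range (k+2),
          (-1:ℤ)^i * ((l+1).choose i) * ((D-i).choose (k+1-i))
          = (-1:ℤ)^i * (l.choose i) * ((D-i).choose (k+1-i))
            + (-1:ℤ)^i * (if i = 0 then 0 else (l.choose (i-1) : ℤ)) * ((D-i).choose (k+1-i)) := by
        intro i _
        cases i with
        | zero => simp
        | succ j => simp [Nat.choose_succ_succ]; ring
      rw [Finset.sum_congr rfl hterm, Finset.sum_add_distrib, ih D (k+1) (by omega)]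
      have h2 : ∑ i ∈ Finset.range (k+2),
          (-1:ℤ)^i * (if i = 0 then 0 else (l.choose (i-1) : ℤ)) * ((D-i).choose (k+1-i))
          = - ∑ j ∈ Finset.range (k+1), (-1:ℤ)^j * (l.choose j) * (((D-1)-j).choose (k-j)) := by
        rw [Finset.sum_range_succ']
        simp only [if_neg (Nat.succ_ne_zero _), Nat.add_sub_cancel, if_pos, eq_self_iff_true,
          if_true, mul_zero, zero_mul, add_zero]
        rw [← Finset.sum_neg_distrib]
        apply Finset.sum_congr rfl
        intro j _
        have e1 : D - (j+1) = (D-1) - j := by omega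
        have e2 : k + 1 - (j+1) = k - j := by omega
        rw [e1, e2, pow_succ]
        ring
      rw [h2, ih (D-1) k (by omega)]
      have e3 : D - 1 - l = D - (l+1) := by omega
      have e4 : D - l = (D - (l+1)) + 1 := by omega
      rw [e3, e4, Nat.choose_succ_succ]
      push_cast
      ring

lemma hockey (D k : ℕ) (hk : 1 ≤ k) : ∀ n, n ≤ D →
    ∑ m ∈ Finset.Icc 1 n, (((D-m).choose (k-1) : ℤ)) = (D.choose k : ℤ) - ((D-n).choose k) := by
  intro n
  induction n with
  | zero => simp
  | succ n ih =>
    intro hn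
    rw [Finset.sum_Icc_succ_top (by omega), ih (by omega)]
    have e1 : (D - n).choose k = (D - (n+1)).choose (k-1) + (D - (n+1)).choose k := by
      have h1 : D - n = (D - (n+1)) + 1 := by omega
      have h2 : k = (k-1) + 1 := by omega
      rw [h1, h2, Nat.choose_succ_succ]
      simp
    rw [e1]
    push_cast
    ring

lemma L5 (D k l : ℕ) (hk : 1 ≤ k) (hkD : k ≤ D) (hl : l ≤ D) :
    ∑ m ∈ Finset.Icc 1 (D - k + 1), (if m ≤ l then ((D-m).choose (k-1) : ℤ) else 0)
      = (D.choose k : ℤ) - ((D-l).choose k) := by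
  rw [← Finset.sum_filter]
  have hfil : (Finset.Icc 1 (D - k + 1)).filter (fun m => m ≤ l) = Finset.Icc 1 (min l (D - k + 1)) := by
    ext m; simp [Finset.mem_filter]; omega
  rw [hfil]
  rcases le_or_gt l (D - k + 1) with h | h
  · rw [min_eq_left h, hockey D k hk l hl]
  · rw [min_eq_right (le_of_lt h), hockey D k hk (D-k+1) (by omega)]
    have h1 : D - (D - k + 1) = k - 1 := by omega
    have h2 : (k-1).choose k = 0 := Nat.choose_eq_zero_of_lt (by omega)
    have h3 : (D-l).choose k = 0 := Nat.choose_eq_zero_of_lt (by omega)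
    rw [h1, h2, h3]

lemma fvec_zero {α : ℕ} (hα : 0 < α) (V : Fin α → Finset ℕ) : fvec V 0 = 1 := by
  have : ((complexOf V).filter fun S => S.card = 0) = {∅} := by
    ext S
    simp only [complexOf, Finset.mem_filter, Finset.mem_biUnion, Finset.mem_univ, true_and,
      Finset.mem_powerset, Finset.card_eq_zero, Finset.mem_singleton]
    constructor
    · rintro ⟨_, rfl⟩; rfl
    · rintro rfl; exact ⟨⟨⟨0, hα⟩, Finset.empty_subset _⟩, rfl⟩
  rw [fvec, this, Finset.card_singleton]

lemma fvec_pos {α : ℕ} (V : Fin α → Finset ℕ)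
    (hdisj : ∀ i j : Fin α, i ≠ j → Disjoint (V i) (V j)) (i : ℕ) (hi : 1 ≤ i) :
    fvec V i = ∑ j : Fin α, (V j).card.choose i := by
  rw [fvec, complexOf, Finset.filter_biUnion]
  rw [Finset.card_biUnion]
  · apply Finset.sum_congr rfl
    intro j _
    rw [← Finset.powersetCard_eq_filter, Finset.card_powersetCard]
  · intro a _ b _ hab
    rw [Function.onFun, Finset.disjoint_left]
    intro S hSa hSb
    simp only [Finset.mem_filter, Finset.mem_powerset] at hSa hSb
    have hne : S.Nonempty := Finset.card_pos.mp (by omega)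
    obtain ⟨x, hx⟩ := hne
    exact Finset.disjoint_left.mp (hdisj a b hab) (hSa.1 hx) (hSb.1 hx)

theorem stmt2 {α : ℕ} (hα : 0 < α) (lam : Fin α → ℕ)
    (hanti : ∀ i j : Fin α, i ≤ j → lam j ≤ lam i) (hpos : ∀ i, 1 ≤ lam i)
    (V : Fin α → Finset ℕ)
    (hdisj : ∀ i j : Fin α, i ≠ j → Disjoint (V i) (V j))
    (hcard : ∀ i, (V i).card = lam i) :
    hvec (lam ⟨0, hα⟩) (fvec V) 0 = 1 ∧
    ∀ k, 1 ≤ k → k ≤ lam ⟨0, hα⟩ →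
      (-1 : ℤ) ^ (k - 1) * hvec (lam ⟨0, hα⟩) (fvec V) k
        = ∑ m ∈ Finset.Icc 1 (lam ⟨0, hα⟩ - k + 1),
            ((lam ⟨0, hα⟩ - m).choose (k - 1)) *
              (((Finset.univ.filter fun j : Fin α => m ≤ lam j).card : ℤ) - 1) := by
  set D := lam ⟨0, hα⟩ with hD
  have hle : ∀ j, lam j ≤ D := fun j => hanti ⟨0, hα⟩ j (by simp [Fin.le_def])
  constructor
  · simp [hvec, fvec_zero hα V]
  · intro k hk1 hkD
    -- Step 1: closed form for hvec
    have ht : ∀ i ∈ Finset.range (k+1),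
        (-1 : ℤ) ^ (k - i) * ((D - i).choose (D - k)) * (fvec V i)
        = (∑ j : Fin α, (-1:ℤ)^k * ((-1)^i * ((lam j).choose i) * ((D-i).choose (k-i))))
          + (-1:ℤ)^k * ((-1)^i * ((D-i).choose (k-i))) * (if i = 0 then 1 - (α:ℤ) else 0) := by
      intro i hi
      rw [Finset.mem_range] at hi
      have hik : i ≤ k := by omega
      have e1 : ((D-i).choose (D-k)) = ((D-i).choose (k-i)) := by
        rw [show D - k = (D-i) - (k-i) from by omega, Nat.choose_symm (by omega)]
      have hsq : ((-1:ℤ)^i) * ((-1:ℤ)^i) = 1 := by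
        rw [← pow_add]; exact Even.neg_one_pow ⟨i, rfl⟩
      have e2 : (-1:ℤ)^(k-i) = (-1:ℤ)^k * (-1:ℤ)^i := by
        calc (-1:ℤ)^(k-i) = (-1:ℤ)^(k-i) * (((-1:ℤ)^i) * ((-1:ℤ)^i)) := by rw [hsq, mul_one]
        _ = (-1:ℤ)^((k-i)+i) * (-1:ℤ)^i := by rw [pow_add]; ring
        _ = (-1:ℤ)^k * (-1:ℤ)^i := by rw [show k-i+i = k from by omega]
      have e3 : (fvec V i : ℤ) = (∑ j : Fin α, ((lam j).choose i : ℤ))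
          + (if i = 0 then 1 - (α:ℤ) else 0) := by
        cases i with
        | zero =>
          rw [fvec_zero hα V]
          simp [Finset.card_univ]
        | succ n =>
          rw [fvec_pos V hdisj (n+1) (by omega)]
          push_cast [hcard]
          simp
      rw [e1, e2, e3, mul_add]
      congr 1
      · rw [Finset.mul_sum]
        apply Finset.sum_congr rfl
        intro j _
        ring
      · ring
    have h1 : hvec D (fvec V) k
        = (-1:ℤ)^k * ((∑ j : Fin α, ((D - lam j).choose k : ℤ)) + (1 - (α:ℤ)) * (D.choose k)) := by
      rw [hvec, Finset.sum_congr rfl ht, Finset.sum_add_distrib, Finset.sum_comm]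
      have h2 : ∀ j ∈ (Finset.univ : Finset (Fin α)),
          ∑ i ∈ Finset.range (k+1), (-1:ℤ)^k * ((-1)^i * ((lam j).choose i) * ((D-i).choose (k-i)))
          = (-1:ℤ)^k * ((D - lam j).choose k) := by
        intro j _
        rw [← Finset.mul_sum]
        congr 1
        rw [← keyA (lam j) D k (hle j)]
      rw [Finset.sum_congr rfl h2]
      have h3 : ∑ i ∈ Finset.range (k+1),
          (-1:ℤ)^k * ((-1)^i * ((D-i).choose (k-i))) * (if i = 0 then 1 - (α:ℤ) else 0)
          = (-1:ℤ)^k * ((D.choose k) * (1 - (α:ℤ))) := by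
        rw [Finset.sum_eq_single 0]
        · simp; ring
        · intro i _ hi; simp [hi]
        · simp
      rw [h3, ← Finset.mul_sum]
      ring
    -- Step 2: sign
    have hsign : (-1:ℤ)^(k-1) * (-1:ℤ)^k = -1 := by
      rw [← pow_add, show k-1+k = 2*(k-1)+1 from by omega, pow_succ, pow_mul]
      simp
    -- Step 3: RHS
    have hcardfil : ∀ m : ℕ, (((Finset.univ.filter fun j : Fin α => m ≤ lam j).card : ℕ) : ℤ)
        = ∑ j : Fin α, (if m ≤ lam j then (1:ℤ) else 0) := by
      intro m
      rw [Finset.card_filter]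
      push_cast
      rfl
    have hR : ∑ m ∈ Finset.Icc 1 (D - k + 1),
          (((D - m).choose (k - 1) : ℤ)) *
            (((Finset.univ.filter fun j : Fin α => m ≤ lam j).card : ℤ) - 1)
        = (∑ j : Fin α, ((D.choose k : ℤ) - ((D - lam j).choose k))) - (D.choose k : ℤ) := by
      have hterm : ∀ m ∈ Finset.Icc 1 (D - k + 1),
          (((D - m).choose (k - 1) : ℤ)) *
            (((Finset.univ.filter fun j : Fin α => m ≤ lam j).card : ℤ) - 1)
          = (∑ j : Fin α, (if m ≤ lam j then ((D-m).choose (k-1) : ℤ) else 0))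
            - ((D-m).choose (k-1) : ℤ) := by
        intro m _
        rw [hcardfil m, mul_sub, mul_one, Finset.mul_sum]
        congr 1
        apply Finset.sum_congr rfl
        intro j _
        rw [mul_ite, mul_one, mul_zero]
      rw [Finset.sum_congr rfl hterm, Finset.sum_sub_distrib, Finset.sum_comm]
      have hL5 : ∀ j ∈ (Finset.univ : Finset (Fin α)),
          ∑ m ∈ Finset.Icc 1 (D - k + 1), (if m ≤ lam j then ((D-m).choose (k-1) : ℤ) else 0)
          = (D.choose k : ℤ) - ((D - lam j).choose k) := fun j _ => L5 D k (lam j) hk1 hkD (hle j)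
      rw [Finset.sum_congr rfl hL5]
      have hfull : ∑ m ∈ Finset.Icc 1 (D - k + 1), (((D-m).choose (k-1) : ℤ)) = (D.choose k : ℤ) := by
        have := L5 D k D hk1 hkD le_rfl
        rw [Nat.sub_self, Nat.choose_eq_zero_of_lt (show 0 < k by omega), Nat.cast_zero, sub_zero] at this
        rw [← this]
        apply Finset.sum_congr rfl
        intro m hm
        rw [Finset.mem_Icc] at hm
        rw [if_pos (by omega)]
      rw [hfull]
    rw [hR, h1]
    rw [show (-1:ℤ)^(k-1) * ((-1:ℤ)^k * ((∑ j : Fin α, ((D - lam j).choose k : ℤ)) + (1 - (α:ℤ)) * (D.choose k))) = ((-1:ℤ)^(k-1) * (-1:ℤ)^k) * ((∑ j : Fin α, ((D - lam j).choose k : ℤ)) + (1 - (α:ℤ)) * (D.choose k)) from by ring, hsign]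
    rw [Finset.sum_sub_distrib, Finset.sum_const, Finset.card_univ, Fintype.card_fin]
    push_cast
    ring
end

section
/- Let ℓ = ρ · 2^m with ρ ≥ 1 odd and m ≥ 0, and let n = 2ℓ. Fix t with 0 ≤ t ≤ 2^m − 1, and let V_t be the set of elements of Z/nZ congruent to 2t+1 modulo 2^{m+1}. Then V_t is an ℓ-zero-sumfree subset of Z/nZ: no multiset of ℓ elements of V_t sums to 0 modulo n. -/
/-- A finite subset `S` of `ZMod n` is `ℓ`-zero-sumfree if no multiset of `ℓ` elements
of `S` (with repetition, encoded by a multiplicity function `c`) sums to `0`. -/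
def IsZeroSumfree (n ℓ : ℕ) (S : Finset (ZMod n)) : Prop :=
  ∀ c : ZMod n → ℕ, (∑ x ∈ S, c x) = ℓ → (∑ x ∈ S, c x • x) ≠ 0

theorem stmt6 (ρ m t : ℕ) (hρ : Odd ρ) (ht : t ≤ 2 ^ m - 1)
    (S : Finset (ZMod (2 * (ρ * 2 ^ m))))
    (hS : ∀ x ∈ S, ∃ k : ZMod (2 * (ρ * 2 ^ m)),
      x = ((2 * t + 1 : ℕ) : ZMod (2 * (ρ * 2 ^ m))) + 2 ^ (m + 1) * k) :
    IsZeroSumfree (2 * (ρ * 2 ^ m)) (ρ * 2 ^ m) S := by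
  intro c hc hsum
  have hdvd : 2 ^ (m + 1) ∣ 2 * (ρ * 2 ^ m) := ⟨ρ, by ring⟩
  haveI : NeZero (2 ^ (m + 1)) := ⟨by positivity⟩
  let f := ZMod.castHom hdvd (ZMod (2 ^ (m + 1)))
  have h2 : ((2 : ZMod (2 ^ (m + 1)))) ^ (m + 1) = 0 := by
    have := ZMod.natCast_self (2 ^ (m + 1))
    push_cast at this
    exact this
  have hx : ∀ x ∈ S, f x = ((2 * t + 1 : ℕ) : ZMod (2 ^ (m + 1))) := by
    intro x hx
    obtain ⟨k, hk⟩ := hS x hx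
    rw [hk, map_add, map_mul, map_pow, map_natCast]
    norm_num [map_ofNat, h2]
  have h0 : (0 : ZMod (2 ^ (m + 1))) = f (∑ x ∈ S, c x • x) := by rw [hsum]; simp
  rw [map_sum] at h0
  have h1 : ∀ x ∈ S, f (c x • x) = c x • ((2 * t + 1 : ℕ) : ZMod (2 ^ (m + 1))) := by
    intro x hxS
    rw [map_nsmul, hx x hxS]
  rw [Finset.sum_congr rfl h1, ← Finset.sum_smul, hc] at h0
  have h0' : ((ρ * 2 ^ m * (2 * t + 1) : ℕ) : ZMod (2 ^ (m + 1))) = 0 := by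
    rw [Nat.cast_mul, ← nsmul_eq_mul, ← h0]
  rw [ZMod.natCast_eq_zero_iff] at h0'
  have hodd : Odd (ρ * (2 * t + 1)) := hρ.mul ⟨t, by ring⟩
  have : 2 ∣ ρ * (2 * t + 1) := by
    have h2m : (0 : ℕ) < 2 ^ m := Nat.pow_pos (by norm_num)
    have : 2 ^ m * 2 ∣ 2 ^ m * (ρ * (2 * t + 1)) := by
      have : ρ * 2 ^ m * (2 * t + 1) = 2 ^ m * (ρ * (2 * t + 1)) := by ring
      rw [this] at h0'
      have : (2 : ℕ) ^ (m + 1) = 2 ^ m * 2 := by ring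
      rwa [this] at h0'
    exact (mul_dvd_mul_iff_left (by positivity : (2:ℕ)^m ≠ 0)).mp this
  obtain ⟨j, hj⟩ := hodd
  omega
end

section
/- Let ℓ = ρ · 2^m with ρ ≥ 1 odd and m ≥ 1, and let n = 2ℓ. If x and y are odd elements of Z/nZ lying in different residue classes modulo 2^{m+1}, then the set {x, y} is not ℓ-zero-sumfree: there exists 0 ≤ r ≤ ℓ with r·x + (ℓ − r)·y ≡ 0 mod n. -/
theorem stmt7 (ρ m : ℕ) (hρ : Odd ρ) (hρ1 : 1 ≤ ρ) (hm : 1 ≤ m)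
    (x y : ZMod (2 * (ρ * 2 ^ m)))
    (hx : ¬ ∃ M, x = 2 * M) (hy : ¬ ∃ M, y = 2 * M)
    (hxy : ¬ ∃ k : ZMod (2 * (ρ * 2 ^ m)), x = y + 2 ^ (m + 1) * k) :
    ∃ r : ℕ, r ≤ ρ * 2 ^ m ∧ r • x + (ρ * 2 ^ m - r) • y = 0 := by
  haveI : NeZero (2 * (ρ * 2 ^ m)) := ⟨by positivity⟩
  set X : ℤ := (x.val : ℤ) with hX
  set Y : ℤ := (y.val : ℤ) with hY
  have hxX : ((X : ℤ) : ZMod (2 * (ρ * 2 ^ m))) = x := by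
    rw [hX]; push_cast; simp [ZMod.natCast_val, ZMod.cast_id]
  have hyY : ((Y : ℤ) : ZMod (2 * (ρ * 2 ^ m))) = y := by
    rw [hY]; push_cast; simp [ZMod.natCast_val, ZMod.cast_id]
  -- X and Y are odd
  have hXodd : Odd X := by
    by_contra h
    rw [Int.not_odd_iff_even] at h
    obtain ⟨c, hc⟩ := h
    exact hx ⟨((c : ℤ) : ZMod (2 * (ρ * 2 ^ m))), by rw [← hxX, hc]; push_cast; ring⟩
  have hYodd : Odd Y := by
    by_contra h
    rw [Int.not_odd_iff_even] at h
    obtain ⟨c, hc⟩ := h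
    exact hy ⟨((c : ℤ) : ZMod (2 * (ρ * 2 ^ m))), by rw [← hyY, hc]; push_cast; ring⟩
  -- 2^(m+1) does not divide X - Y
  have hnd : ¬ ((2 : ℤ) ^ (m + 1) ∣ X - Y) := by
    rintro ⟨c, hc⟩
    exact hxy ⟨((c : ℤ) : ZMod (2 * (ρ * 2 ^ m))), by
      rw [← hxX, ← hyY, show X = Y + 2 ^ (m + 1) * c by linarith]
      push_cast; ring⟩
  -- X - Y = 2 * d
  obtain ⟨d, hd⟩ : (2 : ℤ) ∣ X - Y := by
    obtain ⟨p, hp⟩ := hXodd; obtain ⟨q, hq⟩ := hYodd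
    exact ⟨p - q, by rw [hp, hq]; ring⟩
  have hd0 : d ≠ 0 := by
    rintro rfl
    exact hnd ⟨0, by simpa using hd⟩
  -- d = 2^a * u with u odd
  obtain ⟨a, u₀, hu₀, hdu₀⟩ := Nat.exists_eq_pow_mul_and_not_dvd
    (Int.natAbs_ne_zero.2 hd0) 2 (by norm_num)
  set u : ℤ := d.sign * u₀ with hu
  have hdu : d = 2 ^ a * u := by
    rw [hu, ← mul_assoc, mul_comm ((2:ℤ)^a) d.sign, mul_assoc]
    rw [show ((2:ℤ)^a * (u₀ : ℤ)) = ((2^a * u₀ : ℕ) : ℤ) by push_cast; ring, ← hdu₀]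
    exact (Int.sign_mul_natAbs d).symm
  have huodd : Odd u := by
    rw [← Int.natAbs_odd, hu, Int.natAbs_mul, Int.natAbs_sign_of_ne_zero hd0,
      one_mul, Int.natAbs_natCast, Nat.odd_iff]
    omega
  -- a < m
  have ham : a < m := by
    by_contra h
    push_neg at h
    exact hnd ⟨2 ^ (a - m) * u, by
      rw [hd, hdu,
        show (2:ℤ) ^ (m+1) * (2 ^ (a-m) * u) = 2 ^ (m+1+(a-m)) * u by rw [pow_add]; ring,
        show m+1+(a-m) = a+1 by omega, pow_succ]
      ring⟩
  -- choose r
  have hrl : ρ * 2 ^ (m - 1 - a) ≤ ρ * 2 ^ m := by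
    gcongr
    · norm_num
    · omega
  refine ⟨ρ * 2 ^ (m - 1 - a), hrl, ?_⟩
  obtain ⟨c, hc⟩ : Even (u + Y) := Odd.add_odd huodd hYodd
  have key : ((ρ * 2 ^ (m - 1 - a) : ℕ) : ℤ) * X
      + ((ρ * 2 ^ m - ρ * 2 ^ (m - 1 - a) : ℕ) : ℤ) * Y = ((2 * (ρ * 2 ^ m) : ℕ) : ℤ) * c := by
    have hcast : ((ρ * 2 ^ m - ρ * 2 ^ (m - 1 - a) : ℕ) : ℤ)
        = (ρ : ℤ) * 2 ^ m - (ρ : ℤ) * 2 ^ (m - 1 - a) := by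
      rw [Nat.cast_sub hrl]; push_cast; ring
    have hXY : X = Y + 2 * (2 ^ a * u) := by rw [← hdu]; linarith
    rw [hcast, hXY]
    push_cast
    have e1 : (m - 1 - a) + a + 1 = m := by omega
    calc (ρ:ℤ) * 2 ^ (m-1-a) * (Y + 2 * (2 ^ a * u)) + ((ρ:ℤ) * 2 ^ m - (ρ:ℤ) * 2 ^ (m-1-a)) * Y
        = (ρ:ℤ) * 2 ^ ((m-1-a)+a+1) * u + (ρ:ℤ) * 2 ^ m * Y := by ring
      _ = (ρ:ℤ) * 2 ^ m * (u + Y) := by rw [e1]; ring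
      _ = (ρ:ℤ) * 2 ^ m * (c + c) := by rw [hc]
      _ = (2 * ((ρ:ℤ) * 2 ^ m)) * c := by ring
  have hdvd := (ZMod.intCast_zmod_eq_zero_iff_dvd
    (((ρ * 2 ^ (m - 1 - a) : ℕ) : ℤ) * X + ((ρ * 2 ^ m - ρ * 2 ^ (m - 1 - a) : ℕ) : ℤ) * Y)
    (2 * (ρ * 2 ^ m))).2 ⟨c, by exact_mod_cast key⟩
  rw [nsmul_eq_mul, nsmul_eq_mul, ← hxX, ← hyY]
  push_cast at hdvd ⊢
  linear_combination hdvd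
end

section
/- Let p be prime, e ≥ 1, and n = p^e. Fix 1 ≤ i ≤ p−1 and 1 ≤ j ≤ e, and let V_{i,j} be the set of x in Z/p^eZ with x ≡ i·p^{j−1} mod p^j. Then V_{i,j} is a (p^e − 1)-zero-sumfree subset of Z/p^eZ: no multiset of p^e − 1 elements of V_{i,j} sums to 0 modulo p^e. -/
theorem stmt8 (p e i j : ℕ) (hp : p.Prime) (he : 1 ≤ e)
    (hi1 : 1 ≤ i) (hi2 : i ≤ p - 1) (hj1 : 1 ≤ j) (hj2 : j ≤ e)
    (S : Finset (ZMod (p ^ e)))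
    (hS : ∀ x ∈ S, ∃ k : ZMod (p ^ e),
      x = ((i * p ^ (j - 1) : ℕ) : ZMod (p ^ e)) + ((p ^ j : ℕ) : ZMod (p ^ e)) * k) :
    IsZeroSumfree (p ^ e) (p ^ e - 1) S := by
  intro c hc hsum
  set ℓ := p ^ e - 1
  have hdvd : p ^ j ∣ p ^ e := pow_dvd_pow p hj2
  let f : ZMod (p ^ e) →+* ZMod (p ^ j) := ZMod.castHom hdvd (ZMod (p ^ j))
  have hfx : ∀ x ∈ S, f x = ((i * p ^ (j - 1) : ℕ) : ZMod (p ^ j)) := by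
    intro x hx
    obtain ⟨k, hk⟩ := hS x hx
    rw [hk, map_add, map_mul, map_natCast, map_natCast, ZMod.natCast_self, zero_mul,
      add_zero]
  have h0 : ((ℓ * (i * p ^ (j - 1)) : ℕ) : ZMod (p ^ j)) = 0 := by
    have := congrArg f hsum
    rw [map_sum, map_zero] at this
    calc ((ℓ * (i * p ^ (j - 1)) : ℕ) : ZMod (p ^ j))
        = (∑ x ∈ S, c x) • ((i * p ^ (j - 1) : ℕ) : ZMod (p ^ j)) := by
          rw [hc]; push_cast; ring
      _ = ∑ x ∈ S, c x • ((i * p ^ (j - 1) : ℕ) : ZMod (p ^ j)) := by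
          rw [Finset.sum_smul]
      _ = ∑ x ∈ S, f (c x • x) := by
          refine Finset.sum_congr rfl fun x hx => ?_
          rw [map_nsmul, hfx x hx]
      _ = 0 := this
  have hdvd2 : p ^ j ∣ ℓ * (i * p ^ (j - 1)) :=
    (ZMod.natCast_eq_zero_iff _ _).mp h0
  have hj' : p ^ j = p ^ (j - 1) * p := by
    rw [← pow_succ]; congr 1; omega
  rw [hj'] at hdvd2
  have hmul : ℓ * (i * p ^ (j - 1)) = (ℓ * i) * p ^ (j - 1) := by ring
  rw [hmul] at hdvd2
  have hppos : 0 < p ^ (j - 1) := pow_pos hp.pos _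
  have hpdvd : p ∣ ℓ * i := by
    rcases hdvd2 with ⟨t, ht⟩
    refine ⟨t, ?_⟩
    have : (ℓ * i) * p ^ (j - 1) = (p * t) * p ^ (j - 1) := by
      rw [ht]; ring
    exact Nat.eq_of_mul_eq_mul_right hppos this
  rcases hp.dvd_mul.mp hpdvd with h | h
  · have h1 : p ∣ p ^ e := dvd_pow_self p (Nat.one_le_iff_ne_zero.mp he)
    have : p ∣ 1 := by
      have := Nat.dvd_sub h1 h
      simpa [ℓ, Nat.sub_sub_self (Nat.one_le_pow _ _ hp.pos)] using this
    have := Nat.dvd_one.mp this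
    have := hp.one_lt
    omega
  · have := Nat.le_of_dvd (by omega) h
    omega
end

section
/- Let p be prime and e ≥ 1. Suppose x ≡ i·p^{j−1} mod p^j and y ≡ i'·p^{j'−1} mod p^{j'} with 1 ≤ i, i' ≤ p−1, 1 ≤ j, j' ≤ e, and (i, j) ≠ (i', j'). Then {x, y} is not (p^e − 1)-zero-sumfree in Z/p^eZ: there exists 0 ≤ r ≤ p^e − 1 with r·x + (p^e − 1 − r)·y ≡ 0 mod p^e. -/
lemma stmt9_aux (p e i j i' j' : ℕ) (hp : p.Prime) (he : 1 ≤ e)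
    (hi1 : 1 ≤ i) (hi2 : i ≤ p - 1) (hi'1 : 1 ≤ i') (hi'2 : i' ≤ p - 1)
    (hj1 : 1 ≤ j) (hj2 : j ≤ e) (hj'1 : 1 ≤ j') (hj'2 : j' ≤ e)
    (hjj : j ≤ j') (hne : j = j' → i ≠ i')
    (x y : ZMod (p ^ e))
    (hx : ∃ k : ZMod (p ^ e),
      x = ((i * p ^ (j - 1) : ℕ) : ZMod (p ^ e)) + ((p ^ j : ℕ) : ZMod (p ^ e)) * k)
    (hy : ∃ k : ZMod (p ^ e),
      y = ((i' * p ^ (j' - 1) : ℕ) : ZMod (p ^ e)) + ((p ^ j' : ℕ) : ZMod (p ^ e)) * k) :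
    ∃ r : ℕ, r ≤ p ^ e - 1 ∧ r • x + (p ^ e - 1 - r) • y = 0 := by
  haveI : NeZero (p ^ e) := ⟨pow_ne_zero e hp.pos.ne'⟩
  have hplt : 0 < p ^ e := pow_pos hp.pos e
  obtain ⟨k, hxk⟩ := hx
  obtain ⟨k', hyk⟩ := hy
  obtain ⟨a, rfl⟩ : ∃ a, j = a + 1 := ⟨j - 1, by omega⟩
  obtain ⟨b, rfl⟩ : ∃ b, j' = (a + 1) + b := ⟨j' - (a + 1), by omega⟩
  set P : ZMod (p ^ e) := (p : ZMod (p ^ e)) with hP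
  set T : ZMod (p ^ e) :=
    (i : ZMod (p ^ e)) - (i' : ZMod (p ^ e)) * P ^ b + P * (k - P ^ b * k') with hTdef
  set S : ZMod (p ^ e) := (i' : ZMod (p ^ e)) + P * k' with hSdef
  have hT : P ^ a * T = x - y := by
    rw [hxk, hyk, hTdef]
    push_cast
    rw [show a + 1 + b - 1 = a + b from by omega, pow_add]
    ring
  have hS : y = P ^ (a + b) * S := by
    rw [hyk, hSdef]
    push_cast
    rw [show a + 1 + b - 1 = a + b from by omega, pow_add]
    ring
  -- T is a unit
  have hilt : i < p := by have := hp.two_le; omega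
  have hi'lt : i' < p := by have := hp.two_le; omega
  have hpdvd : p ∣ p ^ e := dvd_pow_self p (by omega)
  have hTunit : IsUnit T := by
    set f : ZMod (p ^ e) →+* ZMod p := ZMod.castHom hpdvd (ZMod p) with hf
    have hfT : f T ≠ 0 := by
      have hfT0 : f T = (i : ZMod p) - (i' : ZMod p) * (p : ZMod p) ^ b := by
        rw [hTdef]
        simp [hP, ZMod.natCast_self]
      rcases Nat.eq_zero_or_pos b with hb | hb
      · subst hb
        have hii' : i ≠ i' := hne (by omega)
        rw [hfT0]
        simp only [pow_zero, mul_one]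
        intro hcon
        have : (i : ZMod p) = (i' : ZMod p) := by
          have := sub_eq_zero.mp hcon
          exact this
        apply hii'
        have h1 := ZMod.val_cast_of_lt hilt
        have h2 := ZMod.val_cast_of_lt hi'lt
        rw [← h1, ← h2, this]
      · rw [hfT0, ZMod.natCast_self, zero_pow (by omega), mul_zero, sub_zero]
        intro hcon
        have : p ∣ i := (ZMod.natCast_eq_zero_iff i p).mp hcon
        have := Nat.le_of_dvd (by omega) this
        omega
    have hTval : ((T.val : ℕ) : ZMod p) = f T := by
      rw [hf, ZMod.castHom_apply, ZMod.natCast_val]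
    have hval : ¬ p ∣ T.val := by
      intro hdvd
      apply hfT
      rw [← hTval, (ZMod.natCast_eq_zero_iff T.val p).mpr hdvd]
    have : T = ((T.val : ℕ) : ZMod (p ^ e)) := by
      rw [ZMod.natCast_val, ZMod.cast_id]
    rw [this, ZMod.isUnit_iff_coprime]
    exact Nat.Coprime.pow_right e ((Nat.coprime_comm.mp (hp.coprime_iff_not_dvd.mpr hval)))
  -- c * (x - y) = y
  set c : ZMod (p ^ e) := T⁻¹ * P ^ b * S with hc
  have hcy : c * (x - y) = y := by
    rw [← hT, hS, hc]
    calc T⁻¹ * P ^ b * S * (P ^ a * T) = (T⁻¹ * T) * (P ^ (a + b) * S) := by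
          rw [pow_add]; ring
      _ = P ^ (a + b) * S := by rw [ZMod.inv_mul_of_unit T hTunit, one_mul]
  refine ⟨c.val, by have := ZMod.val_lt c; omega, ?_⟩
  have hcv : ((c.val : ℕ) : ZMod (p ^ e)) = c := by
    rw [ZMod.natCast_val, ZMod.cast_id]
  have hsub : ((p ^ e - 1 - c.val : ℕ) : ZMod (p ^ e)) = -1 - c := by
    have h1 : c.val ≤ p ^ e - 1 := by have := ZMod.val_lt c; omega
    rw [Nat.cast_sub h1, Nat.cast_sub (by omega : 1 ≤ p ^ e), ZMod.natCast_self, hcv]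
    push_cast
    ring
  rw [nsmul_eq_mul, nsmul_eq_mul, hcv, hsub]
  linear_combination hcy

theorem stmt9 (p e i j i' j' : ℕ) (hp : p.Prime) (he : 1 ≤ e)
    (hi1 : 1 ≤ i) (hi2 : i ≤ p - 1) (hi'1 : 1 ≤ i') (hi'2 : i' ≤ p - 1)
    (hj1 : 1 ≤ j) (hj2 : j ≤ e) (hj'1 : 1 ≤ j') (hj'2 : j' ≤ e)
    (hne : (i, j) ≠ (i', j'))
    (x y : ZMod (p ^ e))
    (hx : ∃ k : ZMod (p ^ e),
      x = ((i * p ^ (j - 1) : ℕ) : ZMod (p ^ e)) + ((p ^ j : ℕ) : ZMod (p ^ e)) * k)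
    (hy : ∃ k : ZMod (p ^ e),
      y = ((i' * p ^ (j' - 1) : ℕ) : ZMod (p ^ e)) + ((p ^ j' : ℕ) : ZMod (p ^ e)) * k) :
    ∃ r : ℕ, r ≤ p ^ e - 1 ∧ r • x + (p ^ e - 1 - r) • y = 0 := by
  rcases le_total j j' with hjj | hjj
  · exact stmt9_aux p e i j i' j' hp he hi1 hi2 hi'1 hi'2 hj1 hj2 hj'1 hj'2 hjj
      (fun hj hi => hne (by rw [hi, hj])) x y hx hy
  · obtain ⟨s, hs1, hs2⟩ := stmt9_aux p e i' j' i j hp he hi'1 hi'2 hi1 hi2 hj'1 hj'2 hj1 hj2 hjj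
      (fun hj hi => hne (by rw [hi, hj])) y x hy hx
    refine ⟨p ^ e - 1 - s, by omega, ?_⟩
    have h1 : p ^ e - 1 - (p ^ e - 1 - s) = s := by omega
    rw [h1, add_comm]
    exact hs2
end

section
/- Let p be an odd prime and 1 ≤ s ≤ p. If x and y are distinct even elements of Z/2pZ, then {x, y} is not (2p − s)-zero-sumfree: there exists 0 ≤ r ≤ 2p − s with r·x + (2p − s − r)·y ≡ 0 mod 2p. -/
theorem stmt11 (p s : ℕ) (hp : p.Prime) (hpodd : p ≠ 2) (hs1 : 1 ≤ s) (hs2 : s ≤ p)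
    (x y : ZMod (2 * p)) (hxy : x ≠ y)
    (hx : ∃ M, x = 2 * M) (hy : ∃ M, y = 2 * M) :
    ∃ r : ℕ, r ≤ 2 * p - s ∧ r • x + (2 * p - s - r) • y = 0 := by
  haveI : Fact p.Prime := ⟨hp⟩
  have hp0 : 0 < p := hp.pos
  haveI : NeZero (2 * p) := ⟨by omega⟩
  obtain ⟨M, rfl⟩ := hx
  obtain ⟨N, rfl⟩ := hy
  set ℓ := 2 * p - s with hℓ
  have hpd : p ∣ 2 * p := dvd_mul_left p 2
  set φ := ZMod.castHom hpd (ZMod p) with hφ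
  have key : ∀ z : ZMod (2 * p), 2 * z = 0 ↔ φ z = 0 := by
    intro z
    have h1 : φ z = ((z.val : ℕ) : ZMod p) := by
      rw [hφ, ZMod.castHom_apply, ← ZMod.natCast_val]
    have h2 : (2 : ZMod (2 * p)) * z = ((2 * z.val : ℕ) : ZMod (2 * p)) := by
      push_cast [ZMod.natCast_val, ZMod.cast_id]
      ring
    rw [h1, h2, ZMod.natCast_eq_zero_iff, ZMod.natCast_eq_zero_iff]
    exact Nat.mul_dvd_mul_iff_left (by norm_num : 0 < 2)
  have hd : φ (M - N) ≠ 0 := by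
    intro h
    apply hxy
    have h2 : 2 * (M - N) = 0 := (key _).mpr h
    have h3 : 2 * M - 2 * N = 0 := by linear_combination h2
    exact sub_eq_zero.mp h3
  set rz : ZMod p := (-(ℓ • φ N)) * (φ (M - N))⁻¹ with hrz
  refine ⟨rz.val, ?_, ?_⟩
  · have := ZMod.val_lt rz
    omega
  · have hrle : rz.val ≤ ℓ := by have := ZMod.val_lt rz; omega
    have heq : rz.val • (2 * M) + (ℓ - rz.val) • (2 * N)
        = 2 * (ℓ • N + rz.val • (M - N)) := by
      rw [nsmul_eq_mul, nsmul_eq_mul, nsmul_eq_mul, nsmul_eq_mul, Nat.cast_sub hrle]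
      ring
    rw [heq, key]
    rw [map_add, map_nsmul, map_nsmul, nsmul_eq_mul, nsmul_eq_mul]
    have hcast : ((rz.val : ℕ) : ZMod p) = rz := by
      rw [ZMod.natCast_val, ZMod.cast_id]
    rw [hcast, hrz]
    rw [nsmul_eq_mul, mul_assoc, inv_mul_cancel₀ hd, mul_one]
    ring
end

section
/- Let p be an odd prime and let s be even with 2 ≤ s ≤ p. If x and y are distinct odd elements of Z/2pZ, then {x, y} is not (2p − s)-zero-sumfree: there exists 0 ≤ r ≤ 2p − s with r·x + (2p − s − r)·y ≡ 0 mod 2p. -/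
theorem stmt12 (p s : ℕ) (hp : p.Prime) (hpodd : p ≠ 2)
    (hseven : Even s) (hs1 : 2 ≤ s) (hs2 : s ≤ p)
    (x y : ZMod (2 * p)) (hxy : x ≠ y)
    (hx : ¬ ∃ M, x = 2 * M) (hy : ¬ ∃ M, y = 2 * M) :
    ∃ r : ℕ, r ≤ 2 * p - s ∧ r • x + (2 * p - s - r) • y = 0 := by
  haveI : Fact p.Prime := ⟨hp⟩
  have hp2 : 2 ≤ p := hp.two_le
  haveI : NeZero (2 * p) := ⟨by omega⟩
  have hxval : ((x.val : ℕ) : ZMod (2 * p)) = x := by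
    simp [ZMod.natCast_val, ZMod.cast_id]
  have hyval : ((y.val : ℕ) : ZMod (2 * p)) = y := by
    simp [ZMod.natCast_val, ZMod.cast_id]
  -- oddness of values
  have hxodd : ¬ (2 ∣ x.val) := by
    rintro ⟨k, hk⟩
    exact hx ⟨(k : ZMod (2*p)), by rw [← hxval, hk]; push_cast; ring⟩
  have hyodd : ¬ (2 ∣ y.val) := by
    rintro ⟨k, hk⟩
    exact hy ⟨(k : ZMod (2*p)), by rw [← hyval, hk]; push_cast; ring⟩
  set c : ℤ := (x.val : ℤ) - (y.val : ℤ) with hcdef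
  have hx1 : x.val % 2 = 1 := Nat.two_dvd_ne_zero.mp hxodd
  have hy1 : y.val % 2 = 1 := Nat.two_dvd_ne_zero.mp hyodd
  have hc2 : (2 : ℤ) ∣ c := by omega
  obtain ⟨u, hu⟩ := hc2
  have hxlt := ZMod.val_lt x
  have hylt := ZMod.val_lt y
  have hpc : ¬ ((p : ℤ) ∣ c) := by
    intro hdvd
    have hcop : IsCoprime (2 : ℤ) (p : ℤ) := by
      rw [Int.isCoprime_iff_gcd_eq_one]
      have : Nat.Coprime 2 p := (Nat.coprime_primes Nat.prime_two hp).mpr (Ne.symm hpodd)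
      simpa [Int.gcd] using this
    have h2p : ((2 * p : ℕ) : ℤ) ∣ c := by
      push_cast
      exact hcop.mul_dvd ⟨u, hu⟩ hdvd
    have hczero : c = 0 := by
      refine Int.eq_zero_of_abs_lt_dvd h2p ?_
      rw [abs_lt]
      constructor <;> push_cast <;> omega
    have : x.val = y.val := by omega
    exact hxy (by rw [← hxval, ← hyval, this])
  have hup : ¬ ((p : ℤ) ∣ u) := fun h => hpc (hu ▸ h.mul_left 2)
  have huz : (u : ZMod p) ≠ 0 := by
    rw [Ne, ZMod.intCast_zmod_eq_zero_iff_dvd]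
    exact hup
  -- ℓ = 2p - s is even
  obtain ⟨m, hm⟩ : ∃ m, 2 * p - s = 2 * m := by
    obtain ⟨k, hk⟩ := hseven
    exact ⟨p - k, by omega⟩
  set t : ZMod p := -((m : ZMod p) * (y.val : ℕ)) / (u : ZMod p) with htdef
  refine ⟨t.val, ?_, ?_⟩
  · have := ZMod.val_lt t
    omega
  · have hrle : t.val ≤ 2 * p - s := by have := ZMod.val_lt t; omega
    have key : ((t.val : ℤ) * u + (m : ℤ) * (y.val : ℤ) : ℤ) = 0 → True := fun _ => trivial
    have hkey : (((t.val : ℤ) * u + (m : ℤ) * (y.val : ℤ) : ℤ) : ZMod p) = 0 := by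
      push_cast
      rw [ZMod.natCast_val, ZMod.cast_id]
      rw [htdef, div_mul_cancel₀ _ huz]
      ring
    have hdvd1 : (p : ℤ) ∣ ((t.val : ℤ) * u + (m : ℤ) * (y.val : ℤ)) :=
      (ZMod.intCast_zmod_eq_zero_iff_dvd _ _).mp hkey
    have hdvd2 : ((2 * p : ℕ) : ℤ) ∣
        ((t.val : ℤ) * (x.val : ℤ) + ((2 * p - s - t.val : ℕ) : ℤ) * (y.val : ℤ)) := by
      have hcast : ((2 * p - s - t.val : ℕ) : ℤ) = ((2*p - s : ℕ) : ℤ) - t.val := by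
        omega
      rw [hcast]
      have hℓ : ((2*p - s : ℕ) : ℤ) = 2 * m := by exact_mod_cast congrArg (Nat.cast : ℕ → ℤ) hm
      have heq : (t.val : ℤ) * (x.val : ℤ) + (((2*p - s : ℕ) : ℤ) - t.val) * (y.val : ℤ)
          = 2 * ((t.val : ℤ) * u + (m : ℤ) * (y.val : ℤ)) := by
        rw [hℓ]
        have : (x.val : ℤ) = 2 * u + y.val := by omega
        rw [this]; ring
      rw [heq]
      push_cast
      exact mul_dvd_mul_left 2 hdvd1
    have hNc : ((t.val * x.val + (2 * p - s - t.val) * y.val : ℕ) : ℤ)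
        = (t.val : ℤ) * (x.val : ℤ) + ((2 * p - s - t.val : ℕ) : ℤ) * (y.val : ℤ) := by
      push_cast
      ring
    have : ((t.val * x.val + (2 * p - s - t.val) * y.val : ℕ) : ZMod (2 * p)) = 0 := by
      rw [ZMod.natCast_eq_zero_iff, ← Int.natCast_dvd_natCast, hNc]
      exact hdvd2
    calc t.val • x + (2 * p - s - t.val) • y
        = ((t.val * x.val + (2 * p - s - t.val) * y.val : ℕ) : ZMod (2 * p)) := by
          push_cast [hxval, hyval]; rw [nsmul_eq_mul, nsmul_eq_mul]
      _ = 0 := this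
end

section
/- Let p be an odd prime. Two elements i (odd) and j (nonzero even) of Z/2pZ satisfy: {i, j} is (2p − 1)-zero-sumfree if and only if i ≡ j mod p. -/
theorem stmt14 (p : ℕ) (hp : p.Prime) (hpodd : p ≠ 2) (i j : ZMod (2 * p))
    (hi : i.val % 2 = 1) (hj : j.val % 2 = 0) (hj0 : j ≠ 0) :
    IsZeroSumfree (2 * p) (2 * p - 1) {i, j}
      ↔ ZMod.castHom (dvd_mul_left p 2) (ZMod p) i
          = ZMod.castHom (dvd_mul_left p 2) (ZMod p) j := by
  haveI : Fact p.Prime := ⟨hp⟩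
  have hp1 : 1 < p := hp.one_lt
  haveI : NeZero (2 * p) := ⟨by positivity⟩
  have hpO : p % 2 = 1 := Nat.odd_iff.mp (hp.odd_of_ne_two hpodd)
  have hij : i ≠ j := by intro h; rw [h] at hi; omega
  have hIlt : i.val < 2 * p := i.val_lt
  have hJlt : j.val < 2 * p := j.val_lt
  have hJ0 : j.val ≠ 0 := fun h => hj0 (by rwa [← ZMod.val_eq_zero])
  have hcast : ∀ x : ZMod (2 * p),
      ZMod.castHom (dvd_mul_left p 2) (ZMod p) x = (x.val : ZMod p) := by
    intro x
    rw [ZMod.castHom_apply, ZMod.natCast_val]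
  have hsum : ∀ c : ZMod (2*p) → ℕ, ∑ x ∈ ({i, j} : Finset (ZMod (2*p))), c x = c i + c j := by
    intro c; rw [Finset.sum_pair hij]
  have hsum2 : ∀ c : ZMod (2*p) → ℕ, ∑ x ∈ ({i, j} : Finset (ZMod (2*p))), c x • x
      = c i • i + c j • j := by
    intro c; rw [Finset.sum_pair hij]
  rw [hcast, hcast]
  constructor
  · intro hzsf
    by_contra hne
    set K := ZMod p
    have hd : ((i.val : K) - (j.val : K)) ≠ 0 := sub_ne_zero_of_ne hne
    set a' : K := (j.val : K) * ((i.val : K) - (j.val : K))⁻¹ with ha'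
    set a0 : ℕ := a'.val with ha0
    have ha0lt : a0 < p := a'.val_lt
    set a : ℕ := if a0 % 2 = 0 then a0 else a0 + p with ha
    have haeven : a % 2 = 0 := by rw [ha]; split <;> omega
    have hale : a ≤ 2 * p - 2 := by rw [ha]; split <;> omega
    have haK : (a : K) = a' := by
      have h0 : ((a0 : ℕ) : K) = a' := ZMod.natCast_zmod_val a'
      rw [ha]; split
      · exact h0
      · push_cast [ZMod.natCast_self]
        simpa using h0
    set b : ℕ := 2 * p - 1 - a with hb
    have hab : a + b = 2 * p - 1 := by omega
    have hbK : (b : K) = -1 - a' := by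
      rw [hb, Nat.cast_sub (by omega), Nat.cast_sub (by omega), haK]
      push_cast
      have hp0 : ((p : ℕ) : K) = 0 := ZMod.natCast_self p
      erw [Nat.cast_mul, hp0]
      ring
    set c : ZMod (2*p) → ℕ := fun x => if x = i then a else b with hc
    have hci : c i = a := by simp [hc]
    have hcj : c j = b := by simp [hc, hij.symm]
    apply hzsf c
    · rw [hsum, hci, hcj, hab]
    · rw [hsum2, hci, hcj]
      have hN : ((a * i.val + b * j.val : ℕ) : ZMod (2*p)) = a • i + b • j := by
        push_cast
        rw [ZMod.natCast_zmod_val, ZMod.natCast_zmod_val]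
        ring
      rw [← hN, ZMod.natCast_eq_zero_iff]
      have h2 : 2 ∣ a * i.val + b * j.val :=
        dvd_add (Dvd.dvd.mul_right (by omega : 2 ∣ a) _)
          (Dvd.dvd.mul_left (by omega : 2 ∣ j.val) _)
      have hpdvd : p ∣ a * i.val + b * j.val := by
        rw [← ZMod.natCast_eq_zero_iff]
        rw [Nat.cast_add, Nat.cast_mul, Nat.cast_mul, haK, hbK, ha']
        linear_combination (j.val : K) * mul_inv_cancel₀ hd
      exact Nat.Coprime.mul_dvd_of_dvd_of_dvd
        ((Nat.coprime_primes Nat.prime_two hp).mpr (Ne.symm hpodd)) h2 hpdvd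
  · intro h c hcsum hczero
    rw [hsum] at hcsum
    rw [hsum2] at hczero
    have key := congrArg (ZMod.castHom (dvd_mul_left p 2) (ZMod p)) hczero
    rw [map_add, map_nsmul, map_nsmul, map_zero, hcast, hcast, h, ← add_nsmul, hcsum] at key
    have h1 : ((2 * p - 1 : ℕ) : ZMod p) = -1 := by
      rw [Nat.cast_sub (by omega)]
      push_cast [ZMod.natCast_self]
      ring
    rw [nsmul_eq_mul, h1] at key
    have hJ : (j.val : ZMod p) = 0 := by linear_combination -key
    rw [ZMod.natCast_eq_zero_iff] at hJ
    obtain ⟨k, hk⟩ := hJ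
    have hklt : k < 2 := by
      have hlt : p * k < p * 2 := by rw [← hk]; omega
      exact Nat.lt_of_mul_lt_mul_left hlt
    interval_cases k <;> omega
end

section
/- Let p ≥ 5 be prime. For i odd and j nonzero even in Z/2pZ, the set {i, j} is (2p − 3)-zero-sumfree if and only if i ≡ j mod p or j ≡ −2i mod 2p. -/
lemma pair_iff_aux (n ℓ : ℕ) (i j : ZMod n) (hij : i ≠ j) :
    IsZeroSumfree n ℓ {i, j} ↔
      ∀ a b : ℕ, a + b = ℓ → (a : ZMod n) * i + (b : ZMod n) * j ≠ 0 := by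
  constructor
  · intro H a b hab h
    refine H (fun x => if x = i then a else b) ?_ ?_
    · rw [Finset.sum_pair hij, if_pos rfl, if_neg (fun hh => hij hh.symm)]
      exact hab
    · rw [Finset.sum_pair hij]
      have e1 : (fun x => if x = i then a else b) i = a := if_pos rfl
      have e2 : (fun x => if x = i then a else b) j = b := if_neg (fun hh => hij hh.symm)
      rw [if_pos rfl, if_neg (fun hh => hij hh.symm)]
      simpa [nsmul_eq_mul] using h
  · intro H c hc
    rw [Finset.sum_pair hij] at hc ⊢
    intro h
    exact H (c i) (c j) hc (by simpa [nsmul_eq_mul] using h)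

lemma key2p {p : ℕ} (hp : p.Prime) (hp5 : 5 ≤ p) (u v : ZMod (2 * p))
    (h2 : u.val % 2 = v.val % 2) (hpd : ((u.val : ZMod p)) = (v.val : ZMod p)) : u = v := by
  haveI : NeZero (2 * p) := ⟨by omega⟩
  have hop : Odd p := hp.odd_of_ne_two (by omega)
  have m2 : u.val ≡ v.val [MOD 2] := h2
  have mp : u.val ≡ v.val [MOD p] := (ZMod.natCast_eq_natCast_iff _ _ _).mp hpd
  have co : Nat.Coprime 2 p := Nat.coprime_two_left.mpr hop
  have m2p : u.val ≡ v.val [MOD 2 * p] := (Nat.modEq_and_modEq_iff_modEq_mul co).mp ⟨m2, mp⟩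
  have hu := ZMod.val_lt u
  have hv := ZMod.val_lt v
  have heq : u.val = v.val := by
    unfold Nat.ModEq at m2p
    rwa [Nat.mod_eq_of_lt hu, Nat.mod_eq_of_lt hv] at m2p
  exact ZMod.val_injective _ heq

theorem stmt15 (p : ℕ) (hp : p.Prime) (hp5 : 5 ≤ p) (i j : ZMod (2 * p))
    (hi : i.val % 2 = 1) (hj : j.val % 2 = 0) (hj0 : j ≠ 0) :
    IsZeroSumfree (2 * p) (2 * p - 3) {i, j}
      ↔ (ZMod.castHom (dvd_mul_left p 2) (ZMod p) i
            = ZMod.castHom (dvd_mul_left p 2) (ZMod p) j ∨ j = -2 * i) := by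
  haveI : NeZero (2 * p) := ⟨by omega⟩
  haveI : Fact p.Prime := ⟨hp⟩
  have hpodd : p % 2 = 1 := Nat.odd_iff.mp (hp.odd_of_ne_two (by omega))
  set φ := ZMod.castHom (dvd_mul_left p 2) (ZMod p) with hφ
  have hij : i ≠ j := fun h => by rw [h] at hi; omega
  have hfi : (i.val : ZMod p) = φ i := by rw [hφ, ZMod.castHom_apply, ZMod.natCast_val]
  have hfj : (j.val : ZMod p) = φ j := by rw [hφ, ZMod.castHom_apply, ZMod.natCast_val]
  have hivlt : i.val < 2 * p := ZMod.val_lt i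
  have hjvlt : j.val < 2 * p := ZMod.val_lt j
  -- p does not divide j.val
  have hjp : ¬ p ∣ j.val := by
    rintro ⟨k, hk⟩
    have hklt : k < 2 := by nlinarith [hk ▸ hjvlt]
    rcases k with _ | _ | k
    · have hjv0 : j.val = 0 := by omega
      exact hj0 (by rw [← ZMod.natCast_zmod_val j, hjv0, Nat.cast_zero])
    · omega
    · omega
  have hφj : φ j ≠ 0 := by
    rw [← hfj]
    rw [Ne, ZMod.natCast_eq_zero_iff]
    exact hjp
  have h3 : (3 : ZMod p) ≠ 0 := by
    have : ((3 : ℕ) : ZMod p) ≠ 0 := by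
      rw [Ne, ZMod.natCast_eq_zero_iff]
      intro h
      have := Nat.le_of_dvd (by norm_num) h
      omega
    simpa using this
  have hlp : ((2 * p - 3 : ℕ) : ZMod p) = -3 := by
    have h1 : ((2 * p - 3 : ℕ) : ZMod p) + ((3 : ℕ) : ZMod p) = 0 := by
      rw [← Nat.cast_add, show 2 * p - 3 + 3 = 2 * p from by omega]
      rw [ZMod.natCast_eq_zero_iff]
      exact dvd_mul_left p 2
    have := eq_neg_of_add_eq_zero_left h1
    simpa using this
  have hln : ((2 * p - 3 : ℕ) : ZMod (2 * p)) = -3 := by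
    have h1 : ((2 * p - 3 : ℕ) : ZMod (2 * p)) + ((3 : ℕ) : ZMod (2 * p)) = 0 := by
      rw [← Nat.cast_add, show 2 * p - 3 + 3 = 2 * p from by omega, ZMod.natCast_self]
    have := eq_neg_of_add_eq_zero_left h1
    simpa using this
  rw [pair_iff_aux _ _ i j hij]
  constructor
  · -- zero-sumfree → condition
    intro H
    by_contra hAB
    push_neg at hAB
    obtain ⟨hA, hB⟩ := hAB
    have hd : φ i - φ j ≠ 0 := sub_ne_zero.mpr hA
    set t : ZMod p := 3 * φ j * (φ i - φ j)⁻¹ with ht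
    have h1 : 3 * φ j = t * (φ i - φ j) := by
      rw [ht, mul_assoc, inv_mul_cancel₀ hd, mul_one]
    set r := t.val with hr
    have hrlt : r < p := ZMod.val_lt t
    have htr : ((r : ℕ) : ZMod p) = t := ZMod.natCast_zmod_val t
    -- r ≠ p - 2
    have hrne : r ≠ p - 2 := by
      intro hre
      have ht2 : t = -2 := by
        rw [← htr, hre]
        have h1 : ((p - 2 : ℕ) : ZMod p) + ((2 : ℕ) : ZMod p) = 0 := by
          rw [← Nat.cast_add, show p - 2 + 2 = p from by omega, ZMod.natCast_self]
        have := eq_neg_of_add_eq_zero_left h1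
        simpa using this
      have hφji : φ j = -2 * φ i := by
        rw [ht2] at h1
        linear_combination h1
      -- conclude j = -2 * i, contradiction
      apply hB
      have hneg2i : (-2 : ZMod (2 * p)) * i = (((2 * p - 2) * i.val : ℕ) : ZMod (2 * p)) := by
        have h2 : ((2 * p - 2 : ℕ) : ZMod (2 * p)) = -2 := by
          have h1 : ((2 * p - 2 : ℕ) : ZMod (2 * p)) + ((2 : ℕ) : ZMod (2 * p)) = 0 := by
            rw [← Nat.cast_add, show 2 * p - 2 + 2 = 2 * p from by omega, ZMod.natCast_self]
          have := eq_neg_of_add_eq_zero_left h1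
          simpa using this
        rw [Nat.cast_mul, h2, ZMod.natCast_zmod_val]
      refine key2p hp hp5 j (-2 * i) ?_ ?_
      · rw [hneg2i, ZMod.val_natCast]
        rw [Nat.mod_mod_of_dvd _ (⟨p, rfl⟩ : (2:ℕ) ∣ 2 * p)]
        rw [Nat.mul_mod, show (2 * p - 2) % 2 = 0 from by omega]
        simpa using hj
      · rw [hneg2i, ZMod.val_natCast]
        have hmod : (((2 * p - 2) * i.val % (2 * p) : ℕ) : ZMod p)
            = (((2 * p - 2) * i.val : ℕ) : ZMod p) := by
          conv_rhs => rw [← Nat.mod_add_div ((2 * p - 2) * i.val) (2 * p)]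
          rw [Nat.cast_add, Nat.cast_mul, show (((2 * p : ℕ)) : ZMod p) = 0 from by
            rw [ZMod.natCast_eq_zero_iff]; exact dvd_mul_left p 2]
          ring
        rw [hmod, hfj, Nat.cast_mul, hfi, hφji]
        have h2 : ((2 * p - 2 : ℕ) : ZMod p) = -2 := by
          have h1 : ((2 * p - 2 : ℕ) : ZMod p) + ((2 : ℕ) : ZMod p) = 0 := by
            rw [← Nat.cast_add, show 2 * p - 2 + 2 = 2 * p from by omega]
            rw [ZMod.natCast_eq_zero_iff]
            exact dvd_mul_left p 2
          have := eq_neg_of_add_eq_zero_left h1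
          simpa using this
        rw [h2]
    -- define a and b
    set a := if r % 2 = 0 then r else r + p with ha
    have ha2 : a % 2 = 0 := by
      rw [ha]; split_ifs with h
      · exact h
      · omega
    have halt : a ≤ 2 * p - 3 := by
      rw [ha]; split_ifs with h
      · omega
      · omega
    have hap : ((a : ℕ) : ZMod p) = t := by
      rw [ha]; split_ifs with h
      · exact htr
      · rw [Nat.cast_add, ZMod.natCast_self, add_zero, htr]
    set b := 2 * p - 3 - a with hb
    have hab : a + b = 2 * p - 3 := by omega
    refine H a b hab ?_
    have hx : (a : ZMod (2 * p)) * i + (b : ZMod (2 * p)) * j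
        = ((a * i.val + b * j.val : ℕ) : ZMod (2 * p)) := by
      rw [Nat.cast_add, Nat.cast_mul, Nat.cast_mul, ZMod.natCast_zmod_val, ZMod.natCast_zmod_val]
    rw [hx]
    have h0 : ((a * i.val + b * j.val : ℕ) : ZMod (2 * p)) = (0 : ZMod (2 * p)) := by
      refine key2p hp hp5 _ 0 ?_ ?_
      · rw [ZMod.val_natCast, ZMod.val_zero]
        rw [Nat.mod_mod_of_dvd _ (⟨p, rfl⟩ : (2:ℕ) ∣ 2 * p)]
        rw [Nat.add_mod, Nat.mul_mod, Nat.mul_mod b, ha2, hj]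
        simp
      · rw [ZMod.val_natCast, ZMod.val_zero, Nat.cast_zero]
        have hmod : ((( a * i.val + b * j.val) % (2 * p) : ℕ) : ZMod p)
            = (((a * i.val + b * j.val : ℕ)) : ZMod p) := by
          conv_rhs => rw [← Nat.mod_add_div (a * i.val + b * j.val) (2 * p)]
          rw [Nat.cast_add, Nat.cast_mul, show (((2 * p : ℕ)) : ZMod p) = 0 from by
            rw [ZMod.natCast_eq_zero_iff]; exact dvd_mul_left p 2]
          ring
        rw [hmod, Nat.cast_add, Nat.cast_mul, Nat.cast_mul, hfi, hfj, hap]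
        have hbp : ((b : ℕ) : ZMod p) = -3 - t := by
          rw [hb, Nat.cast_sub halt, hlp, hap]
        rw [hbp]
        linear_combination -h1
    exact h0
  · -- condition → zero-sumfree
    rintro (hA | hB) a b hab h
    · -- case φ i = φ j
      have h2 := congrArg φ h
      rw [map_add, map_mul, map_mul, map_natCast, map_natCast, map_zero, hA, ← add_mul,
        ← Nat.cast_add, hab, hlp] at h2
      have h4 : (3 : ZMod p) * φ j = 0 := by linear_combination -h2
      exact mul_ne_zero h3 hφj h4
    · -- case j = -2 * i
      subst hB
      -- p does not divide i.val
      have hip : ¬ p ∣ i.val := by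
        rintro ⟨k, hk⟩
        have hklt : k < 2 := by nlinarith [hk ▸ hivlt]
        rcases k with _ | _ | k
        · omega
        · -- i.val = p, then -2*i = 0
          apply hj0
          have hivp : i.val = p := by omega
          have hi2 : i = ((p : ℕ) : ZMod (2 * p)) := by
            rw [← ZMod.natCast_zmod_val i, hivp]
          rw [hi2]
          have h2p : ((2 * p : ℕ) : ZMod (2 * p)) = 0 := ZMod.natCast_self _
          push_cast at h2p
          linear_combination -h2p
        · omega
      have hiu : IsUnit i := by
        rw [← ZMod.natCast_zmod_val i]
        rw [ZMod.isUnit_iff_coprime]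
        exact Nat.Coprime.mul_right ((Nat.odd_iff.mpr hi).coprime_two_right)
          ((hp.coprime_iff_not_dvd.mpr hip).symm)
      have h5 : ((a : ZMod (2 * p)) - 2 * b) * i = 0 := by linear_combination h
      have h6 : (a : ZMod (2 * p)) - 2 * (b : ZMod (2 * p)) = 0 :=
        (hiu.mul_left_eq_zero).mp h5
      have h7 : (a : ZMod (2 * p)) + (b : ZMod (2 * p)) = -3 := by
        rw [← Nat.cast_add, hab, hln]
      have h8 : (3 : ZMod (2 * p)) * ((b : ZMod (2 * p)) + 1) = 0 := by
        linear_combination h7 - h6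
      have h3u : IsUnit (3 : ZMod (2 * p)) := by
        have : IsUnit (((3:ℕ) : ZMod (2 * p))) := by
          rw [ZMod.isUnit_iff_coprime]
          refine Nat.Coprime.mul_right (by norm_num) ?_
          exact (Nat.coprime_primes (by norm_num) hp).mpr (by omega)
        simpa using this
      have h9 : ((b + 1 : ℕ) : ZMod (2 * p)) = 0 := by
        push_cast
        exact (h3u.mul_right_eq_zero).mp h8
      rw [ZMod.natCast_eq_zero_iff] at h9
      have := Nat.le_of_dvd (by omega) h9
      omega
end
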